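/- arXiv:1406.6170 — 6 statements merged into one kernel-verified Lean document; each statement's English description precedes it below -/
import Mathlib

section
/- For a 1-dimensional subspace V of F_q^b spanned by a nonzero vector v, the subspace P_V := span{φ(v; e_i) : i ≠ r(v)} has dimension b−1; that is, the vectors φ(v; e_i) for i in [b], i ≠ r(v), are linearly independent. -/
/-- The Plücker embedding of the 2×b matrix with rows `a`, `c`:
indexed by pairs (i,j) with i < j, coordinate a_i·c_j − a_j·c_i. -/
def plucker {F : Type*} [Field F] {b : ℕ} (a c : Fin b → F) :
    {p : Fin b × Fin b // p.1 < p.2} → F :=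
  fun p => a p.1.1 * c p.1.2 - a p.1.2 * c p.1.1

theorem plucker_subspace_dim {F : Type*} [Field F] {b : ℕ}
    (v : Fin b → F) (r : Fin b)
    (hr : v r ≠ 0) (hrmin : ∀ i : Fin b, i < r → v i = 0) :
    LinearIndependent F
      (fun i : {i : Fin b // i ≠ r} => plucker v (Pi.single i.1 (1 : F))) ∧
    Module.finrank F
      (Submodule.span F ((fun i => plucker v (Pi.single i (1 : F))) '' {i | i ≠ r})) =
        b - 1 := by
  set f : {i : Fin b // i ≠ r} → ({p : Fin b × Fin b // p.1 < p.2} → F) :=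
    fun i => plucker v (Pi.single i.1 (1 : F)) with hf
  -- the distinguished coordinate for each i
  have pairlt : ∀ i : {i : Fin b // i ≠ r}, ¬ i.1 < r → r < i.1 := by
    intro i h
    exact (i.2.lt_or_gt).resolve_left h
  let pair : {i : Fin b // i ≠ r} → {p : Fin b × Fin b // p.1 < p.2} :=
    fun i => if h : i.1 < r then ⟨(i.1, r), h⟩ else ⟨(r, i.1), pairlt i h⟩
  have key : ∀ i j : {i : Fin b // i ≠ r},
      f j (pair i) = if j = i then (if i.1 < r then -v r else v r) else 0 := by
    intro i j
    by_cases h : i.1 < r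
    · have hvi : v i.1 = 0 := hrmin i.1 h
      simp only [pair, dif_pos h, hf, plucker, hvi, Pi.single_apply, if_pos h]
      by_cases hji : j = i
      · subst hji; simp
      · have : ¬ (i.1 = j.1) := fun e => hji (Subtype.ext e.symm)
        simp [this, hji]
    · have hrj : ¬ (r = j.1) := fun e => j.2 e.symm
      simp only [pair, dif_neg h, hf, plucker, Pi.single_apply, if_neg h, hrj, if_false,
        mul_zero, sub_zero]
      by_cases hji : j = i
      · subst hji; simp
      · have : ¬ (i.1 = j.1) := fun e => hji (Subtype.ext e.symm)
        simp [this, hji]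
  have hli : LinearIndependent F f := by
    rw [Fintype.linearIndependent_iff]
    intro g hg i
    have h1 := congrFun hg (pair i)
    simp only [Finset.sum_apply, Pi.smul_apply, smul_eq_mul, Pi.zero_apply] at h1
    have h2 : ∑ j, g j * f j (pair i) = g i * (if i.1 < r then -v r else v r) := by
      rw [Finset.sum_congr rfl (fun j _ => by rw [key i j])]
      simp [mul_ite]
    rw [h2] at h1
    rcases mul_eq_zero.mp h1 with h | h
    · exact h
    · exfalso
      by_cases hc : i.1 < r <;> simp [hc] at h <;> exact hr h
  refine ⟨hli, ?_⟩
  have himg : ((fun i => plucker v (Pi.single i (1 : F))) '' {i | i ≠ r}) = Set.range f := by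
    rw [hf, Set.image_eq_range]
    rfl
  rw [himg, finrank_span_eq_card hli]
  have : Fintype.card {i : Fin b // i ≠ r} = b - 1 := by
    rw [Fintype.card_subtype_compl]
    simp
  simp only [this]
end

section
/- Let U and V be distinct 1-dimensional subspaces of F_q^b, with U = span{u} and V = span{v}. Then the intersection P_U ∩ P_V equals the span of φ(u; v); in particular, dim(P_U ∩ P_V) = 1. -/
section aux

variable {F : Type*} [Field F] {b : ℕ}

/-- `plucker u ·` as a linear map in the second argument. -/
def pluckerL (u : Fin b → F) :
    (Fin b → F) →ₗ[F] ({p : Fin b × Fin b // p.1 < p.2} → F) where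
  toFun c := plucker u c
  map_add' c d := by funext p; simp [plucker]; ring
  map_smul' r c := by funext p; simp [plucker]; ring

lemma pluckerL_apply (u c : Fin b → F) : pluckerL u c = plucker u c := rfl

lemma pluckerL_self (u : Fin b → F) : pluckerL u u = 0 := by
  funext p; simp [pluckerL, plucker]; ring

lemma span_eq_range (u : Fin b → F) (ru : Fin b) (hru : u ru ≠ 0) :
    Submodule.span F ((fun i => plucker u (Pi.single i (1:F))) '' {i | i ≠ ru}) =
      LinearMap.range (pluckerL u) := by
  have himg : (fun i => plucker u (Pi.single i (1:F))) '' {i | i ≠ ru}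
      = pluckerL u '' ((fun i => Pi.single i (1:F)) '' {i | i ≠ ru}) := by
    rw [Set.image_image]; rfl
  rw [himg, Submodule.span_image]
  apply le_antisymm (LinearMap.map_le_range)
  rintro x ⟨c, rfl⟩
  set l := c ru / u ru with hl
  have hkey : pluckerL u c = pluckerL u (c - l • u) := by
    rw [map_sub, map_smul, pluckerL_self, smul_zero, sub_zero]
  rw [hkey]
  apply Submodule.mem_map_of_mem
  have hcru : (c - l • u) ru = 0 := by
    simp [hl]
    field_simp
    ring
  have hrep : (c - l • u) = ∑ i : Fin b, Pi.single i ((c - l • u) i) := by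
    exact (Finset.univ_sum_single (c - l • u)).symm
  rw [hrep]
  apply Submodule.sum_mem
  intro i _
  by_cases hi : i = ru
  · subst hi
    rw [hcru]
    simp
  · have : (Pi.single i ((c - l • u) i) : Fin b → F) = ((c - l • u) i) • (Pi.single i (1:F) : Fin b → F) := by
      funext j
      by_cases hj : j = i <;> simp [Pi.single_apply, hj]
    rw [this]
    exact Submodule.smul_mem _ _ (Submodule.subset_span ⟨i, hi, rfl⟩)

lemma plucker_all (u c v d : Fin b → F) (h : pluckerL u c = pluckerL v d) :
    ∀ i j : Fin b, u i * c j - u j * c i = v i * d j - v j * d i := by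
  intro i j
  rcases lt_trichotomy i j with hij | hij | hij
  · exact congrFun h ⟨(i, j), hij⟩
  · subst hij; ring
  · have := congrFun h ⟨(j, i), hij⟩
    simp only [pluckerL_apply, plucker] at this
    linear_combination -this

end aux

theorem plucker_subspaces_intersection {F : Type*} [Field F] {b : ℕ}
    (u v : Fin b → F) (hu : u ≠ 0) (hv : v ≠ 0)
    (hUV : Submodule.span F {u} ≠ Submodule.span F {v})
    (ru rv : Fin b)
    (hru : u ru ≠ 0) (hrumin : ∀ i : Fin b, i < ru → u i = 0)
    (hrv : v rv ≠ 0) (hrvmin : ∀ i : Fin b, i < rv → v i = 0) :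
    (Submodule.span F ((fun i => plucker u (Pi.single i (1 : F))) '' {i | i ≠ ru})) ⊓
      (Submodule.span F ((fun i => plucker v (Pi.single i (1 : F))) '' {i | i ≠ rv})) =
      Submodule.span F {plucker u v} ∧
    Module.finrank F
      ((Submodule.span F ((fun i => plucker u (Pi.single i (1 : F))) '' {i | i ≠ ru})) ⊓
        (Submodule.span F ((fun i => plucker v (Pi.single i (1 : F))) '' {i | i ≠ rv})) :
        Submodule F _) = 1 := by
  -- plucker u v ≠ 0
  have hpne : plucker u v ≠ 0 := by
    intro h0
    apply hUV
    have hall : ∀ i j : Fin b, u i * v j - u j * v i = 0 := by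
      intro i j
      rcases lt_trichotomy i j with hij | hij | hij
      · exact congrFun h0 ⟨(i, j), hij⟩
      · subst hij; ring
      · have := congrFun h0 ⟨(j, i), hij⟩
        simp only [plucker, Pi.zero_apply] at this
        linear_combination -this
    set a := v ru / u ru with ha
    have hveq : v = a • u := by
      funext j
      have h1 := hall ru j
      show v j = a * u j
      rw [ha]
      field_simp
      linear_combination h1
    have hne : a ≠ 0 := by
      intro h
      rw [h, zero_smul] at hveq
      exact hv hveq
    apply le_antisymm
    · rw [Submodule.span_le, Set.singleton_subset_iff, SetLike.mem_coe,
        Submodule.mem_span_singleton]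
      exact ⟨a⁻¹, by rw [hveq, smul_smul, inv_mul_cancel₀ hne, one_smul]⟩
    · rw [Submodule.span_le, Set.singleton_subset_iff, SetLike.mem_coe,
        Submodule.mem_span_singleton]
      exact ⟨a, hveq.symm⟩
  obtain ⟨p0, hp0⟩ : ∃ p, plucker u v p ≠ 0 := by
    by_contra h
    push_neg at h
    exact hpne (funext h)
  set s := p0.1.1
  set t := p0.1.2
  have hdelta : u s * v t - u t * v s ≠ 0 := hp0
  have hmain :
      (Submodule.span F ((fun i => plucker u (Pi.single i (1 : F))) '' {i | i ≠ ru})) ⊓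
      (Submodule.span F ((fun i => plucker v (Pi.single i (1 : F))) '' {i | i ≠ rv})) =
      Submodule.span F {plucker u v} := by
    rw [span_eq_range u ru hru, span_eq_range v rv hrv]
    apply le_antisymm
    · rintro x ⟨⟨c, hc⟩, ⟨d, hd⟩⟩
      have hall := plucker_all u c v d (by rw [hc, hd])
      set δ := u s * v t - u t * v s
      set α := (c s * v t - c t * v s) / δ with hα
      set β := (u s * c t - u t * c s) / δ with hβ
      have hck : ∀ k, c k = α * u k + β * v k := by
        intro k
        have h1 := hall s k
        have h2 := hall t k
        have h3 := hall s t
        have hδk : δ * c k = (c s * v t - c t * v s) * u k + (u s * c t - u t * c s) * v k := by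
          linear_combination v t * h1 - v s * h2 - v k * h3
        rw [hα, hβ]
        field_simp
        linear_combination hδk
      rw [Submodule.mem_span_singleton]
      refine ⟨β, ?_⟩
      rw [← hc]
      funext p
      simp only [pluckerL_apply, plucker, Pi.smul_apply, smul_eq_mul]
      rw [hck p.1.1, hck p.1.2]
      ring
    · rw [Submodule.span_le, Set.singleton_subset_iff]
      constructor
      · exact ⟨v, rfl⟩
      · refine ⟨-u, ?_⟩
        funext p
        simp only [pluckerL_apply, plucker, Pi.neg_apply]
        ring
  refine ⟨hmain, ?_⟩
  rw [hmain]
  exact finrank_span_singleton hpne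
end

section
/- For distinct 1-subspaces U, V of F_q^b, the subspace distance d_S(P_U, P_V) = dim P_U + dim P_V − 2·dim(P_U ∩ P_V) equals 2b − 4. -/
section Aux

variable {F : Type*} [Field F] {b : ℕ}

/-- The Plücker map as a linear map in the second argument. -/
def pluckerMap (u : Fin b → F) :
    (Fin b → F) →ₗ[F] ({p : Fin b × Fin b // p.1 < p.2} → F) where
  toFun c := plucker u c
  map_add' c d := by funext p; simp [plucker]; ring
  map_smul' t c := by funext p; simp [plucker]; ring

lemma pluckerMap_apply (u c : Fin b → F) (p : {p : Fin b × Fin b // p.1 < p.2}) :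
    pluckerMap u c p = u p.1.1 * c p.1.2 - u p.1.2 * c p.1.1 := rfl

lemma pluckerMap_self (u : Fin b → F) : pluckerMap u u = 0 := by
  funext p; simp [pluckerMap_apply]; ring

lemma pluckerMap_eq_all {u c v d : Fin b → F}
    (h : pluckerMap u c = pluckerMap v d) :
    ∀ p q : Fin b, u p * c q - u q * c p = v p * d q - v q * d p := by
  intro p q
  rcases lt_trichotomy p q with hpq | rfl | hpq
  · have := congrFun h ⟨(p, q), hpq⟩
    simpa [pluckerMap_apply] using this
  · ring
  · have := congrFun h ⟨(q, p), hpq⟩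
    simp only [pluckerMap_apply] at this
    linear_combination -this

lemma span_plucker_eq_range (u : Fin b → F) (ru : Fin b) (hru : u ru ≠ 0) :
    Submodule.span F ((fun i => plucker u (Pi.single i (1 : F))) '' {i | i ≠ ru}) =
    LinearMap.range (pluckerMap u) := by
  apply le_antisymm
  · rw [Submodule.span_le]
    rintro _ ⟨i, _, rfl⟩
    exact ⟨Pi.single i 1, rfl⟩
  · rintro _ ⟨c, rfl⟩
    set c' : Fin b → F := c - (c ru / u ru) • u with hc'
    have h1 : pluckerMap u c = pluckerMap u c' := by
      rw [hc', map_sub, map_smul, pluckerMap_self, smul_zero, sub_zero]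
    have hcru : c' ru = 0 := by
      simp only [hc', Pi.sub_apply, Pi.smul_apply, smul_eq_mul]
      field_simp
      ring
    have h2 : c' = ∑ i, c' i • (Pi.single i (1 : F) : Fin b → F) := by
      have := Finset.univ_sum_single c'
      rw [← this]
      congr 1
      funext i
      funext j
      rcases eq_or_ne i j with rfl | hij
      · simp
      · simp [Pi.single_apply, hij]
    rw [h1, h2, map_sum]
    apply Submodule.sum_mem
    intro i _
    rcases eq_or_ne i ru with rfl | hi
    · rw [map_smul, hcru, zero_smul]
      exact Submodule.zero_mem _
    · rw [map_smul]
      exact Submodule.smul_mem _ _ (Submodule.subset_span ⟨i, hi, rfl⟩)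

lemma ker_pluckerMap (u : Fin b → F) (ru : Fin b) (hru : u ru ≠ 0) :
    LinearMap.ker (pluckerMap u) = Submodule.span F {u} := by
  ext c
  simp only [LinearMap.mem_ker, Submodule.mem_span_singleton]
  constructor
  · intro h
    have key : ∀ p q : Fin b, u p * c q - u q * c p = 0 := by
      have h0 : pluckerMap u c = pluckerMap u 0 := by simpa using h
      intro p q
      have := pluckerMap_eq_all h0 p q
      simpa using this
    refine ⟨c ru / u ru, ?_⟩
    funext q
    simp only [Pi.smul_apply, smul_eq_mul]
    field_simp
    linear_combination -key ru q
  · rintro ⟨a, rfl⟩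
    funext p
    simp [pluckerMap_apply]
    ring

lemma finrank_range_pluckerMap (u : Fin b → F) (hu : u ≠ 0) (ru : Fin b)
    (hru : u ru ≠ 0) :
    Module.finrank F (LinearMap.range (pluckerMap u)) + 1 = b := by
  have h := LinearMap.finrank_range_add_finrank_ker (pluckerMap u)
  rw [ker_pluckerMap u ru hru, finrank_span_singleton hu, Module.finrank_fin_fun] at h
  exact h

lemma exists_minor (u v : Fin b → F) (hv : v ≠ 0) (ru : Fin b) (hru : u ru ≠ 0)
    (hUV : Submodule.span F {u} ≠ Submodule.span F {v}) :
    ∃ p q : Fin b, u p * v q - u q * v p ≠ 0 := by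
  by_contra h
  push_neg at h
  apply hUV
  have hveq : v = (v ru / u ru) • u := by
    funext q
    simp only [Pi.smul_apply, smul_eq_mul]
    field_simp
    linear_combination h ru q
  have hvru : v ru ≠ 0 := by
    intro h0
    apply hv
    rw [hveq, h0, zero_div, zero_smul]
  have : IsUnit (v ru / u ru) := by
    apply isUnit_iff_ne_zero.2
    exact div_ne_zero hvru hru
  rw [show ({v} : Set (Fin b → F)) = {(v ru / u ru) • u} by rw [← hveq],
    Submodule.span_singleton_smul_eq this]

lemma inter_eq_span (u v : Fin b → F) (p0 q0 : Fin b)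
    (hD : u p0 * v q0 - u q0 * v p0 ≠ 0) :
    LinearMap.range (pluckerMap u) ⊓ LinearMap.range (pluckerMap v) =
    Submodule.span F {plucker u v} := by
  apply le_antisymm
  · rintro x hx
    obtain ⟨⟨c, rfl⟩, d, hd⟩ := hx
    rw [Submodule.mem_span_singleton]
    refine ⟨(u p0 * c q0 - u q0 * c p0) / (u p0 * v q0 - u q0 * v p0), ?_⟩
    have key := pluckerMap_eq_all (hd.symm : pluckerMap u c = pluckerMap v d)
    funext pq
    obtain ⟨⟨p, q⟩, hpq⟩ := pq
    have main : (u p0 * v q0 - u q0 * v p0) * (u p * c q - u q * c p)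
        = (u p0 * c q0 - u q0 * c p0) * (u p * v q - u q * v p) := by
      linear_combination (u p0 * v q0 - u q0 * v p0) * key p q
        - v q * u p0 * key p q0 + v q * u q0 * key p p0
        + v p * u p0 * key q q0 - v p * u q0 * key q p0
    simp only [Pi.smul_apply, smul_eq_mul, plucker, pluckerMap_apply]
    rw [div_mul_eq_mul_div, div_eq_iff hD]
    linear_combination -main
  · rw [Submodule.span_le, Set.singleton_subset_iff]
    refine ⟨⟨v, rfl⟩, ⟨-u, ?_⟩⟩
    funext p
    simp [pluckerMap_apply, plucker]
    ring

end Aux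

theorem plucker_subspace_distance {F : Type*} [Field F] {b : ℕ}
    (u v : Fin b → F) (hu : u ≠ 0) (hv : v ≠ 0)
    (hUV : Submodule.span F {u} ≠ Submodule.span F {v})
    (ru rv : Fin b)
    (hru : u ru ≠ 0) (hrumin : ∀ i : Fin b, i < ru → u i = 0)
    (hrv : v rv ≠ 0) (hrvmin : ∀ i : Fin b, i < rv → v i = 0) :
    Module.finrank F
      (Submodule.span F ((fun i => plucker u (Pi.single i (1 : F))) '' {i | i ≠ ru})) +
    Module.finrank F
      (Submodule.span F ((fun i => plucker v (Pi.single i (1 : F))) '' {i | i ≠ rv})) -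
    2 * Module.finrank F
      ((Submodule.span F ((fun i => plucker u (Pi.single i (1 : F))) '' {i | i ≠ ru})) ⊓
       (Submodule.span F ((fun i => plucker v (Pi.single i (1 : F))) '' {i | i ≠ rv})) :
        Submodule F ({p : Fin b × Fin b // p.1 < p.2} → F)) = 2 * b - 4 := by
  obtain ⟨p0, q0, hD⟩ := exists_minor u v hv ru hru hUV
  rw [span_plucker_eq_range u ru hru, span_plucker_eq_range v rv hrv,
    inter_eq_span u v p0 q0 hD]
  -- the Plücker vector of (u, v) is nonzero
  have hpne : p0 ≠ q0 := by
    intro h; subst h; apply hD; ring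
  have hplne : plucker u v ≠ 0 := by
    intro h
    rcases lt_or_gt_of_ne hpne with hlt | hlt
    · have := congrFun h ⟨(p0, q0), hlt⟩
      exact hD this
    · have := congrFun h ⟨(q0, p0), hlt⟩
      apply hD
      simp only [plucker, Pi.zero_apply] at this
      linear_combination -this
  rw [finrank_span_singleton hplne]
  have hb : 2 ≤ b := by
    have : Nontrivial (Fin b) := ⟨p0, q0, hpne⟩
    have := Fintype.one_lt_card (α := Fin b)
    simp at this; omega
  have h1 := finrank_range_pluckerMap u hu ru hru
  have h2 := finrank_range_pluckerMap v hv rv hrv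
  omega
end

section
/- Let c divide b, let {v_1,...,v_b} be a basis of F_q^b partitioned into b/c subsets A_i of size c, and let V_i be a set of representatives of all (q^c−1)/(q−1) one-dimensional subspaces of span(A_i). Then V = ∪_i V_i is a (q^{c−1}−1)-resilient spanning set: after removing any q^{c−1}−1 elements of V, the remaining elements still span F_q^b. -/
theorem partitioned_representatives_resilient {F : Type*} [Field F] [Fintype F] 
    {q b c : ℕ} (hq : Fintype.card F = q) (hc : 0 < c) (hcb : c ∣ b) [DecidableEq (Fin b → F)]
    (v : Module.Basis (Fin b) F (Fin b → F))
    (A : Fin (b / c) → Finset (Fin b))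
    (hAdisj : ∀ i j, i ≠ j → Disjoint (A i) (A j))
    (hAcard : ∀ i, (A i).card = c)
    (hAcover : Finset.univ.biUnion A = Finset.univ)
    (V : Fin (b / c) → Finset (Fin b → F))
    (hVmem : ∀ i, ∀ w ∈ V i, w ≠ 0 ∧ w ∈ Submodule.span F (v '' (A i)))
    (hVrep : ∀ i, ∀ x : Fin b → F, x ∈ Submodule.span F (v '' (A i)) → x ≠ 0 →
      ∃! w, w ∈ V i ∧ Submodule.span F {w} = Submodule.span F {x}) :
    ∀ T ⊆ Finset.univ.biUnion V, T.card = q ^ (c - 1) - 1 →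
      Submodule.span F
        ((Finset.univ.biUnion V \ T : Finset (Fin b → F)) : Set (Fin b → F)) = ⊤ := by
  classical
  intro T hT hTcard
  have hq2 : 2 ≤ q := hq ▸ Fintype.one_lt_card
  set S : Finset (Fin b → F) := Finset.univ.biUnion V \ T with hS
  have key : ∀ i, Submodule.span F (v '' (A i)) ≤ Submodule.span F (S : Set (Fin b → F)) := by
    intro i
    set W := Submodule.span F (v '' (A i)) with hWdef
    by_contra hle
    have hsub : ((V i \ T : Finset (Fin b → F)) : Set (Fin b → F)) ⊆ (S : Set (Fin b → F)) := by
      intro x hx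
      rw [Finset.mem_coe, Finset.mem_sdiff] at hx
      rw [Finset.mem_coe, hS, Finset.mem_sdiff]
      exact ⟨Finset.mem_biUnion.2 ⟨i, Finset.mem_univ i, hx.1⟩, hx.2⟩
    set H := Submodule.span F ((V i \ T : Finset (Fin b → F)) : Set (Fin b → F)) with hHdef
    have hHW : H ≤ W := by
      rw [hHdef, Submodule.span_le]
      intro x hx
      rw [Finset.mem_coe, Finset.mem_sdiff] at hx
      exact (hVmem i x hx.1).2
    have hHne : H ≠ W := fun h => hle (h ▸ Submodule.span_mono hsub)
    have hHlt : H < W := lt_of_le_of_ne hHW hHne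
    -- finrank W = c
    have hliA : LinearIndependent F fun x : (A i : Set (Fin b)) => v x :=
      v.linearIndependent.comp _ Subtype.val_injective
    have hli : LinearIndependent F fun x : (v '' (A i) : Set (Fin b → F)) => (x : Fin b → F) :=
      LinearIndepOn.id_image hliA
    have hWr : Module.finrank F W = c := by
      rw [hWdef, finrank_span_set_eq_card hli, Set.toFinset_image,
        Finset.card_image_of_injective _ v.injective]
      simp [hAcard i]
    have hHr : Module.finrank F H ≤ c - 1 := by
      have := Submodule.finrank_lt_finrank_of_lt hHlt
      omega
    -- cardinalities
    have hcardW : (Finset.univ.filter (· ∈ W)).card = q ^ c := by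
      rw [← Fintype.card_subtype, Module.card_eq_pow_finrank (K := F), hq, hWr]
    have hcardH : (Finset.univ.filter (· ∈ H)).card ≤ q ^ (c - 1) := by
      rw [← Fintype.card_subtype, Module.card_eq_pow_finrank (K := F), hq]
      exact Nat.pow_le_pow_right (by omega) hHr
    -- the set X of vectors in W but not in H
    set X : Finset (Fin b → F) := Finset.univ.filter (fun x => x ∈ W ∧ x ∉ H) with hX
    have hXcard : q ^ c - q ^ (c - 1) ≤ X.card := by
      have h1 : (Finset.univ.filter (· ∈ W)) \ (Finset.univ.filter (· ∈ H)) ⊆ X := by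
        intro x hx
        rw [Finset.mem_sdiff, Finset.mem_filter, Finset.mem_filter] at hx
        rw [hX, Finset.mem_filter]
        exact ⟨Finset.mem_univ x, hx.1.2, fun h => hx.2 ⟨Finset.mem_univ x, h⟩⟩
      calc q ^ c - q ^ (c - 1)
          ≤ (Finset.univ.filter (· ∈ W)).card - (Finset.univ.filter (· ∈ H)).card := by
            omega
        _ ≤ ((Finset.univ.filter (· ∈ W)) \ (Finset.univ.filter (· ∈ H))).card := by
            have := Finset.card_le_card_sdiff_add_card
              (s := Finset.univ.filter (· ∈ W)) (t := Finset.univ.filter (· ∈ H))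
            omega
        _ ≤ X.card := Finset.card_le_card h1
    -- representative function
    set f : (Fin b → F) → (Fin b → F) := fun x =>
      if h : ∃ w, w ∈ V i ∧ Submodule.span F {w} = Submodule.span F {x} then h.choose else 0
      with hf
    have hfspec : ∀ x ∈ X, f x ∈ V i ∧ Submodule.span F {f x} = Submodule.span F {x} := by
      intro x hx
      rw [hX, Finset.mem_filter] at hx
      have hx0 : x ≠ 0 := fun h => hx.2.2 (h ▸ H.zero_mem)
      obtain ⟨w, hw, -⟩ := hVrep i x hx.2.1 hx0
      have hex : ∃ w, w ∈ V i ∧ Submodule.span F {w} = Submodule.span F {x} := ⟨w, hw⟩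
      rw [hf]
      simp only [hex, dif_pos]
      exact hex.choose_spec
    have himg : X.image f ⊆ (V i).filter (· ∉ H) := by
      intro w hw
      obtain ⟨x, hx, rfl⟩ := Finset.mem_image.1 hw
      obtain ⟨hmem, hspan⟩ := hfspec x hx
      rw [Finset.mem_filter]
      refine ⟨hmem, fun hfH => ?_⟩
      rw [hX, Finset.mem_filter] at hx
      apply hx.2.2
      have : x ∈ Submodule.span F {f x} := hspan ▸ Submodule.mem_span_singleton_self x
      exact (Submodule.span_singleton_le_iff_mem _ _).2 hfH this
    have hfiber : ∀ w ∈ X.image f, (X.filter (fun x => f x = w)).card ≤ q - 1 := by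
      intro w hw
      have hsub2 : X.filter (fun x => f x = w) ⊆
          (Finset.univ.filter (fun a : F => a ≠ 0)).image (· • w) := by
        intro x hx
        rw [Finset.mem_filter] at hx
        obtain ⟨hxX, hfx⟩ := hx
        obtain ⟨-, hspan⟩ := hfspec x hxX
        have hx0 : x ≠ 0 := by
          rw [hX, Finset.mem_filter] at hxX
          exact fun h => hxX.2.2 (h ▸ H.zero_mem)
        have : x ∈ Submodule.span F {w} := by
          rw [← hfx, hspan]
          exact Submodule.mem_span_singleton_self x
        obtain ⟨a, rfl⟩ := Submodule.mem_span_singleton.1 this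
        refine Finset.mem_image.2 ⟨a, Finset.mem_filter.2 ⟨Finset.mem_univ a, ?_⟩, rfl⟩
        rintro rfl
        exact hx0 (zero_smul F w)
      calc (X.filter (fun x => f x = w)).card
          ≤ ((Finset.univ.filter (fun a : F => a ≠ 0)).image (· • w)).card :=
            Finset.card_le_card hsub2
        _ ≤ (Finset.univ.filter (fun a : F => a ≠ 0)).card := Finset.card_image_le
        _ = q - 1 := by
            rw [Finset.filter_ne', Finset.card_erase_of_mem (Finset.mem_univ 0),
              Finset.card_univ, hq]
    have hmain : X.card ≤ (q - 1) * (X.image f).card :=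
      Finset.card_le_mul_card_image X (q - 1) hfiber
    -- V i \ H ⊆ T
    have hVT : (V i).filter (· ∉ H) ⊆ T := by
      intro w hw
      rw [Finset.mem_filter] at hw
      by_contra hwT
      exact hw.2 (Submodule.subset_span (Finset.mem_coe.2 (Finset.mem_sdiff.2 ⟨hw.1, hwT⟩)))
    have hVTcard : ((V i).filter (· ∉ H)).card ≤ q ^ (c - 1) - 1 :=
      hTcard ▸ Finset.card_le_card hVT
    have himgcard : (X.image f).card ≤ q ^ (c - 1) - 1 :=
      le_trans (Finset.card_le_card himg) hVTcard
    -- arithmetic contradiction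
    have hqc : q ^ c = q ^ (c - 1) * q := by
      conv_lhs => rw [show c = c - 1 + 1 by omega]
      ring
    have hm1 : 1 ≤ q ^ (c - 1) := Nat.one_le_pow _ _ (by omega)
    have hchain : q ^ c - q ^ (c - 1) ≤ (q - 1) * (q ^ (c - 1) - 1) := by
      calc q ^ c - q ^ (c - 1) ≤ X.card := hXcard
        _ ≤ (q - 1) * (X.image f).card := hmain
        _ ≤ (q - 1) * (q ^ (c - 1) - 1) := Nat.mul_le_mul_left _ himgcard
    have h1 : q ^ c - q ^ (c-1) = q ^ (c-1) * (q - 1) := by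
      rw [Nat.mul_sub, hqc]; omega
    have h2 : (q - 1) * (q ^ (c-1) - 1) = q ^ (c-1) * (q-1) - (q-1) := by
      rw [Nat.mul_sub, Nat.mul_comm]; omega
    have h3 : q - 1 ≤ q ^ (c-1) * (q - 1) := Nat.le_mul_of_pos_left _ (by omega)
    omega
  -- conclude
  refine le_antisymm le_top ?_
  rw [← v.span_eq]
  apply Submodule.span_le.2
  rintro x ⟨j, rfl⟩
  have hj : j ∈ Finset.univ.biUnion A := hAcover ▸ Finset.mem_univ j
  obtain ⟨i, -, hji⟩ := Finset.mem_biUnion.1 hj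
  exact key i (Submodule.subset_span ⟨j, hji, rfl⟩)
end

section
/- Let W be a c-dimensional vector space over F_q and let V be a set of representatives of all (q^c−1)/(q−1) one-dimensional subspaces of W. For any subset T of V with |T| ≤ q^{c−1}−1, the set V \ T spans W. -/
open Submodule Finset

theorem representatives_resilient {F : Type*} [Field F] [Fintype F]
    {q c : ℕ} (hq : Fintype.card F = q)
    (W : Type*) [AddCommGroup W] [Module F W] [FiniteDimensional F W] [DecidableEq W]
    (hW : Module.finrank F W = c)
    (V : Finset W)
    (hVmem : ∀ w ∈ V, w ≠ 0)
    (hVrep : ∀ x : W, x ≠ 0 →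
      ∃! w, w ∈ V ∧ Submodule.span F {w} = Submodule.span F {x}) :
    ∀ T ⊆ V, T.card ≤ q ^ (c - 1) - 1 →
      Submodule.span F ((V \ T : Finset W) : Set W) = ⊤ := by
  classical
  intro T hTV hTcard
  by_contra hU
  have hq2 : 2 ≤ q := hq ▸ Fintype.one_lt_card
  haveI : Finite W := Module.finite_of_finite F
  haveI : Fintype W := Fintype.ofFinite W
  set U : Submodule F W := span F ((V \ T : Finset W) : Set W) with hUdef
  have hUlt : U < ⊤ := lt_top_iff_ne_top.mpr hU
  have hd : Module.finrank F U < c := hW ▸ Submodule.finrank_lt hUlt.ne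
  have hc1 : 1 ≤ c := Nat.one_le_of_lt (Nat.lt_of_le_of_lt (Nat.zero_le _) hd)
  -- representative function
  have hr : ∀ x : W, x ≠ 0 → ∃ w, w ∈ V ∧ span F {w} = span F {x} :=
    fun x hx => (hVrep x hx).exists
  let r : W → W := fun x => if hx : x ≠ 0 then (hr x hx).choose else 0
  have hrspec : ∀ (x : W) (hx : x ≠ 0), r x ∈ V ∧ span F {r x} = span F {x} := by
    intro x hx
    simp only [r, dif_pos hx]
    exact (hr x hx).choose_spec
  have hruniq : ∀ (x : W), x ≠ 0 → ∀ w ∈ V, span F {w} = span F {x} → w = r x := by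
    intro x hx w hw hsp
    obtain ⟨u, _, huu⟩ := hVrep x hx
    rw [huu w ⟨hw, hsp⟩, huu (r x) (hrspec x hx)]
  set X : Finset W := univ.filter (fun x => x ∉ U) with hX
  set S : Finset W := V.filter (fun w => w ∉ U) with hS
  have hmap : ∀ x ∈ X, r x ∈ S := by
    intro x hx
    simp only [hX, mem_filter, mem_univ, true_and] at hx
    have hx0 : x ≠ 0 := fun h => hx (h ▸ U.zero_mem)
    obtain ⟨hrV, hrsp⟩ := hrspec x hx0
    simp only [hS, mem_filter]
    refine ⟨hrV, fun hrU => hx ?_⟩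
    have hxm : x ∈ span F {r x} := hrsp ▸ mem_span_singleton_self x
    exact (span_singleton_le_iff_mem _ _).mpr hrU hxm
  -- spans equal iff membership, for nonzero vectors
  have hspan_eq : ∀ (w x : W), w ≠ 0 → x ≠ 0 → x ∈ span F {w} →
      span F {x} = span F {w} := by
    intro w x hw hx hm
    apply le_antisymm ((span_singleton_le_iff_mem _ _).mpr hm)
    obtain ⟨a, ha⟩ := mem_span_singleton.mp hm
    have ha0 : a ≠ 0 := by rintro rfl; simp at ha; exact hx ha.symm
    apply (span_singleton_le_iff_mem _ _).mpr
    exact mem_span_singleton.mpr ⟨a⁻¹, by rw [← ha, smul_smul, inv_mul_cancel₀ ha0, one_smul]⟩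
  have hXcard : X.card = S.card * (q - 1) := by
    rw [Finset.card_eq_sum_card_fiberwise hmap]
    rw [Finset.sum_congr rfl (fun w hw => ?_), Finset.sum_const, smul_eq_mul]
    simp only [hS, mem_filter] at hw
    have hw0 : w ≠ 0 := hVmem w hw.1
    have hfib : X.filter (fun x => r x = w)
        = (univ.filter (fun x => x ∈ span F {w})).erase 0 := by
      ext x
      simp only [hX, Finset.filter_filter, mem_filter, mem_univ, true_and, mem_erase]
      constructor
      · rintro ⟨hxU, hrw⟩
        have hx0 : x ≠ 0 := fun h => hxU (h ▸ U.zero_mem)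
        have hsp := (hrspec x hx0).2
        rw [hrw] at hsp
        exact ⟨hx0, hsp ▸ mem_span_singleton_self x⟩
      · rintro ⟨hx0, hxsp⟩
        have hsp : span F {x} = span F {w} := hspan_eq w x hw0 hx0 hxsp
        refine ⟨fun hxU => hw.2 ?_, (hruniq x hx0 w hw.1 hsp.symm).symm⟩
        have : w ∈ span F {x} := hsp ▸ mem_span_singleton_self w
        exact (span_singleton_le_iff_mem _ _).mpr hxU this
    rw [hfib, Finset.card_erase_of_mem (by simp [U.zero_mem, (span F {w}).zero_mem])]
    have hcs : (univ.filter (fun x => x ∈ span F {w})).card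
        = Fintype.card (span F {w}) := (Fintype.card_subtype _).symm
    rw [hcs, Module.card_eq_pow_finrank (K := F), finrank_span_singleton hw0, hq, pow_one]
  -- X.card = q^c - q^d
  have hWcard : Fintype.card W = q ^ c := by
    rw [Module.card_eq_pow_finrank (K := F), hq, hW]
  have hUcard : (univ.filter (fun x : W => x ∈ U)).card = q ^ Module.finrank F U := by
    rw [← Fintype.card_subtype, Module.card_eq_pow_finrank (K := F), hq]
  have hXcard2 : X.card = q ^ c - q ^ Module.finrank F U := by
    have := Finset.card_filter_add_card_filter_not
      (s := (univ : Finset W)) (p := fun x => x ∈ U)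
    rw [Finset.card_univ, hWcard, hUcard] at this
    simp only [hX]
    omega
  -- S ⊆ T
  have hST : S ⊆ T := by
    intro w hw
    simp only [hS, mem_filter] at hw
    by_contra hwT
    exact hw.2 (subset_span (by simp [hw.1, hwT]))
  have hScard : S.card ≤ q ^ (c - 1) - 1 := (Finset.card_le_card hST).trans hTcard
  -- arithmetic contradiction
  have hdle : q ^ Module.finrank F U ≤ q ^ (c - 1) :=
    Nat.pow_le_pow_right (by omega) (by omega)
  have hkey : q ^ (c - 1) * (q - 1) ≤ X.card := by
    rw [hXcard2]
    have : q ^ (c - 1) * q = q ^ c := by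
      rw [← pow_succ]
      congr 1
      omega
    have hcc : q ^ (c-1) ≤ q ^ c := Nat.pow_le_pow_right (by omega) (by omega)
    calc q ^ (c - 1) * (q - 1) = q ^ (c-1) * q - q ^ (c-1) := by
          rw [Nat.mul_sub_one]
      _ = q ^ c - q ^ (c-1) := by rw [this]
      _ ≤ q ^ c - q ^ Module.finrank F U := by omega
  have hpos : 1 ≤ q ^ (c - 1) := Nat.one_le_pow _ _ (by omega)
  have : X.card ≤ (q ^ (c-1) - 1) * (q - 1) :=
    hXcard ▸ Nat.mul_le_mul_right _ hScard
  have hlt : (q ^ (c-1) - 1) * (q - 1) < q ^ (c-1) * (q - 1) :=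
    (Nat.mul_lt_mul_right (by omega)).mpr (by omega)
  omega
end

section
/- For every even integer b ≥ 2 there exists a b×b matrix N over F_2 such that: (1) the last column is zero; (2) N_{b,i} = 1 for all i in [b−1]; (3) all diagonal entries are zero; (4) for all i ≠ j, N_{i,j} ≠ N_{j,i}; and (5) every column except the last has Hamming weight b/2. -/
lemma mod_key {m a i : ℕ} (ha : a < m) (hi : i < m) (hne : i ≠ a) :
    1 ≤ (a + m - i) % m ∧ (a + m - i) % m ≤ m - 1 ∧ (a + m - ((a + m - i) % m)) % m = i := by
  rcases Nat.lt_or_ge i a with h | h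
  · have h1 : (a + m - i) % m = a - i := by
      rw [show a + m - i = (a - i) + m by omega, Nat.add_mod_right]
      exact Nat.mod_eq_of_lt (by omega)
    rw [h1, show a + m - (a - i) = i + m by omega, Nat.add_mod_right,
      Nat.mod_eq_of_lt hi]
    omega
  · have h' : a < i := by omega
    have h1 : (a + m - i) % m = a + m - i := Nat.mod_eq_of_lt (by omega)
    rw [h1, show a + m - (a + m - i) = i by omega, Nat.mod_eq_of_lt hi]
    omega

lemma mod_round {m a k : ℕ} (ha : a < m) (hk1 : 1 ≤ k) (hk : k < m) :
    (a + m - ((a + m - k) % m)) % m = k := by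
  rcases Nat.lt_or_ge a k with h | h
  · have h1 : (a + m - k) % m = a + m - k := Nat.mod_eq_of_lt (by omega)
    rw [h1, show a + m - (a + m - k) = k by omega]
    exact Nat.mod_eq_of_lt hk
  · have h1 : (a + m - k) % m = a - k := by
      rw [show a + m - k = (a - k) + m by omega, Nat.add_mod_right]
      exact Nat.mod_eq_of_lt (by omega)
    rw [h1, show a + m - (a - k) = k + m by omega, Nat.add_mod_right]
    exact Nat.mod_eq_of_lt hk

lemma mod_sum {m i j : ℕ} (hi : i < m) (hj : j < m) (hne : i ≠ j) :
    (j + m - i) % m + (i + m - j) % m = m := by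
  rcases Nat.lt_or_ge i j with h | h
  · have h1 : (j + m - i) % m = j - i := by
      rw [show j + m - i = (j - i) + m by omega, Nat.add_mod_right]
      exact Nat.mod_eq_of_lt (by omega)
    have h2 : (i + m - j) % m = i + m - j := Nat.mod_eq_of_lt (by omega)
    rw [h1, h2]; omega
  · have h' : j < i := by omega
    have h1 : (i + m - j) % m = i - j := by
      rw [show i + m - j = (i - j) + m by omega, Nat.add_mod_right]
      exact Nat.mod_eq_of_lt (by omega)
    have h2 : (j + m - i) % m = j + m - i := Nat.mod_eq_of_lt (by omega)
    rw [h1, h2]; omega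

theorem exists_good_matrix_even {b : ℕ} (hb : 2 ≤ b) (heven : Even b) :
    ∃ N : Matrix (Fin b) (Fin b) (ZMod 2),
      (∀ i : Fin b, N i ⟨b - 1, by omega⟩ = 0) ∧
      (∀ i : Fin b, (i : ℕ) < b - 1 → N ⟨b - 1, by omega⟩ i = 1) ∧
      (∀ i : Fin b, N i i = 0) ∧
      (∀ i j : Fin b, i ≠ j → N i j ≠ N j i) ∧
      (∀ j : Fin b, (j : ℕ) < b - 1 →
        (Finset.univ.filter fun i : Fin b => N i j ≠ 0).card = b / 2) := by
  obtain ⟨r, hr⟩ := heven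
  set m := b - 1 with hm
  set s := (b - 2) / 2 with hs
  have hms : m = 2 * s + 1 := by omega
  have hb2 : b = 2 * s + 2 := by omega
  refine ⟨fun i j => if (j : ℕ) = m then 0 else if (i : ℕ) = m then 1 else
    if 1 ≤ ((j : ℕ) + m - i) % m ∧ ((j : ℕ) + m - i) % m ≤ s then 1 else 0,
    ?_, ?_, ?_, ?_, ?_⟩
  · intro i; simp [← hm]
  · intro i hi
    have h1 : (i : ℕ) ≠ m := by omega
    simp [h1, ← hm]
  · intro i
    by_cases h : (i : ℕ) = m
    · simp [h]
    · have h0 : ((i : ℕ) + m - i) % m = 0 := by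
        rw [show (i : ℕ) + m - i = m by omega]
        simp
      simp [h, h0]
  · intro i j hij
    have hij' : (i : ℕ) ≠ (j : ℕ) := fun h => hij (Fin.ext h)
    by_cases hjm : (j : ℕ) = m
    · have him : (i : ℕ) ≠ m := by omega
      simp [hjm, him]
    · by_cases him : (i : ℕ) = m
      · simp [hjm, him]
      · have hi : (i : ℕ) < m := by omega
        have hj : (j : ℕ) < m := by omega
        have hsum := mod_sum hi hj hij'
        obtain ⟨h1, h1', -⟩ := mod_key hj hi hij'
        obtain ⟨h2, h2', -⟩ := mod_key hi hj (Ne.symm hij')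
        by_cases hc : ((j : ℕ) + m - i) % m ≤ s
        · have hc2 : ¬ ((i : ℕ) + m - j) % m ≤ s := by omega
          simp [hjm, him, hc, hc2, h1]
        · have hc2 : ((i : ℕ) + m - j) % m ≤ s := by omega
          simp [hjm, him, hc, hc2, h1, h2]
  · intro j hj
    have hjm : (j : ℕ) ≠ m := by omega
    have hjlt : (j : ℕ) < m := by omega
    have hset : (Finset.univ.filter fun i : Fin b =>
        (if (j : ℕ) = m then (0 : ZMod 2) else if (i : ℕ) = m then 1 else
          if 1 ≤ ((j : ℕ) + m - i) % m ∧ ((j : ℕ) + m - i) % m ≤ s then 1 else 0) ≠ 0) =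
        insert ⟨m, by omega⟩ (Finset.univ.filter fun i : Fin b =>
          (i : ℕ) < m ∧ 1 ≤ ((j : ℕ) + m - i) % m ∧ ((j : ℕ) + m - i) % m ≤ s) := by
      ext i
      simp only [Finset.mem_filter, Finset.mem_univ, true_and, Finset.mem_insert]
      by_cases him : (i : ℕ) = m
      · have hieq : i = (⟨m, by omega⟩ : Fin b) := Fin.ext him
        simp [hjm, him, hieq]
      · have hineq : i ≠ (⟨m, by omega⟩ : Fin b) := fun h => him (by rw [h])
        have hilt : (i : ℕ) < m := by omega
        by_cases hc : 1 ≤ ((j : ℕ) + m - i) % m ∧ ((j : ℕ) + m - i) % m ≤ s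
        · simp [hjm, him, hc, hineq, hilt]
        · simp [hjm, him, hc, hineq, hilt]
    rw [hset, Finset.card_insert_of_notMem (by simp)]
    have hcard : (Finset.univ.filter fun i : Fin b =>
        (i : ℕ) < m ∧ 1 ≤ ((j : ℕ) + m - i) % m ∧ ((j : ℕ) + m - i) % m ≤ s).card =
        (Finset.Icc 1 s).card := by
      refine Finset.card_nbij' (fun i => ((j : ℕ) + m - (i : ℕ)) % m)
        (fun k => (⟨((j : ℕ) + m - k) % m, by
          have := Nat.mod_lt ((j : ℕ) + m - k) (show 0 < m by omega); omega⟩ : Fin b))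
        ?_ ?_ ?_ ?_
      · intro i hi
        simp only [Finset.mem_coe, Finset.mem_filter, Finset.mem_univ, true_and] at hi
        simp only [Finset.mem_coe, Finset.mem_Icc]
        exact ⟨hi.2.1, hi.2.2⟩
      · intro k hk
        simp only [Finset.mem_coe, Finset.mem_Icc] at hk
        have hklt : k < m := by omega
        have hround := mod_round hjlt hk.1 hklt
        simp only [Finset.mem_coe, Finset.mem_filter, Finset.mem_univ, true_and]
        refine ⟨Nat.mod_lt _ (by omega), ?_, ?_⟩
        · rw [hround]; exact hk.1
        · rw [hround]; exact hk.2
      · intro i hi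
        simp only [Finset.mem_coe, Finset.mem_filter, Finset.mem_univ, true_and] at hi
        have hne : (i : ℕ) ≠ (j : ℕ) := by
          intro h
          have h0 : ((j : ℕ) + m - i) % m = 0 := by
            rw [h, show (j : ℕ) + m - j = m by omega]
            simp
          omega
        obtain ⟨-, -, h3⟩ := mod_key hjlt hi.1 hne
        exact Fin.ext h3
      · intro k hk
        simp only [Finset.mem_coe, Finset.mem_Icc] at hk
        exact mod_round hjlt hk.1 (by omega)
    rw [hcard, Nat.card_Icc]
    omega
end
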